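/- Let m = 2^p − 1 with p > 1 an integer. Then in the ring Q_m, the element (x_1 + x_2 + ⋯ + x_m)^m equals 0. -/

import Mathlib

open MvPolynomial Finset
open Fin.NatCast

noncomputable section

/-- The defining ideal of `Q_m`: generated by `x_1^2` and `x_i^2 - x_{i-1} x_i` for `2 ≤ i ≤ m`
(variables are 1-based; `X ((i-1 : ℕ) : Fin m)` is `x_i`). -/
def Qrel (m : ℕ) [NeZero m] : Ideal (MvPolynomial (Fin m) (ZMod 2)) :=
  Ideal.span ((fun i : ℕ =>
      X ((i - 1 : ℕ) : Fin m) ^ 2 -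
        (if i = 1 then 0 else X ((i - 2 : ℕ) : Fin m) * X ((i - 1 : ℕ) : Fin m))) ''
    Set.Icc 1 m)

/-- The ring `Q_m`. -/
abbrev Qring (m : ℕ) [NeZero m] : Type :=
  MvPolynomial (Fin m) (ZMod 2) ⧸ Qrel m

/-- The image of `x_i` (1-based, for `1 ≤ i ≤ m`) in `Q_m`. -/
def xQ (m : ℕ) [NeZero m] (i : ℕ) : Qring m :=
  Ideal.Quotient.mk (Qrel m) (X ((i - 1 : ℕ) : Fin m))


lemma two_pow_halves {e : ℕ} (he : 1 ≤ e) : 2^(e-1) + 2^(e-1) = 2^e := by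
  rw [← two_mul, ← pow_succ']
  congr 1
  omega

lemma choose_parity_sums : ∀ e : ℕ, 1 ≤ e →
    (∑ i ∈ Finset.range (e+1), if Even i then e.choose i else 0) = 2^(e-1) ∧
    (∑ i ∈ Finset.range (e+1), if ¬ Even i then e.choose i else 0) = 2^(e-1) := by
  intro e
  induction e with
  | zero => omega
  | succ e ih =>
    intro _
    by_cases he : 1 ≤ e
    · obtain ⟨ihS, ihT⟩ := ih he
      have hg_top : (if Even (e+1) then e.choose (e+1) else 0) = 0 := by
        rw [Nat.choose_succ_self, ite_self]
      have hh_top : (if ¬ Even (e+1) then e.choose (e+1) else 0) = 0 := by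
        rw [Nat.choose_succ_self, ite_self]
      have hgshift : (∑ k ∈ Finset.range (e+1), if Even (k+1) then e.choose (k+1) else 0) + 1
          = 2^(e-1) := by
        have h := Finset.sum_range_succ' (fun j => if Even j then e.choose j else 0) (e+1)
        rw [Finset.sum_range_succ (fun j => if Even j then e.choose j else 0) (e+1),
            hg_top, add_zero] at h
        rw [← ihS, h]
        norm_num
      have hhshift : (∑ k ∈ Finset.range (e+1), if ¬ Even (k+1) then e.choose (k+1) else 0)
          = 2^(e-1) := by
        have h := Finset.sum_range_succ' (fun j => if ¬ Even j then e.choose j else 0) (e+1)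
        rw [Finset.sum_range_succ (fun j => if ¬ Even j then e.choose j else 0) (e+1),
            hh_top, add_zero] at h
        rw [← ihT, h]
        norm_num
      have hcancel : e + 1 - 1 = e := by omega
      constructor
      · rw [Finset.sum_range_succ' (fun i => if Even i then (e+1).choose i else 0) (e+1)]
        have step : ∀ k, (if Even (k+1) then (e+1).choose (k+1) else 0)
            = (if ¬ Even k then e.choose k else 0)
              + (if Even (k+1) then e.choose (k+1) else 0) := by
          intro k
          rw [Nat.choose_succ_succ]
          by_cases h : Even k
          · simp [h, Nat.even_add_one]
          · simp [h, Nat.even_add_one]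
        simp only [step]
        rw [Finset.sum_add_distrib, if_pos (Even.zero), Nat.choose_zero_right,
            add_assoc, hgshift, ihT, hcancel]
        exact two_pow_halves he
      · rw [Finset.sum_range_succ' (fun i => if ¬ Even i then (e+1).choose i else 0) (e+1)]
        have step : ∀ k, (if ¬ Even (k+1) then (e+1).choose (k+1) else 0)
            = (if Even k then e.choose k else 0)
              + (if ¬ Even (k+1) then e.choose (k+1) else 0) := by
          intro k
          rw [Nat.choose_succ_succ]
          by_cases h : Even k
          · simp [h, Nat.even_add_one]
          · simp [h, Nat.even_add_one]
        simp only [step]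
        rw [Finset.sum_add_distrib, if_neg (by simp), add_zero, ihS, hhshift, hcancel]
        exact two_pow_halves he
    · have h0 : e = 0 := by omega
      subst h0
      exact ⟨by decide, by decide⟩

section Aux

variable (m : ℕ) [NeZero m]

lemma qrel_mem (i : ℕ) (h1 : 1 ≤ i) (h2 : i ≤ m) :
    (X ((i - 1 : ℕ) : Fin m) ^ 2 -
      (if i = 1 then 0 else X ((i - 2 : ℕ) : Fin m) * X ((i - 1 : ℕ) : Fin m)))
      ∈ Qrel m :=
  Ideal.subset_span ⟨i, Set.mem_Icc.2 ⟨h1, h2⟩, rfl⟩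

lemma rel_one : xQ m 1 ^ 2 = 0 := by
  have h := Ideal.Quotient.eq_zero_iff_mem.2
    (qrel_mem m 1 le_rfl (Nat.one_le_iff_ne_zero.2 (NeZero.ne m)))
  rw [if_pos rfl, sub_zero] at h
  simp only [xQ, ← map_pow]
  exact h

lemma rel_succ (i : ℕ) (h1 : 2 ≤ i) (h2 : i ≤ m) :
    xQ m i ^ 2 = xQ m (i - 1) * xQ m i := by
  have h := Ideal.Quotient.eq_zero_iff_mem.2 (qrel_mem m i (by omega) h2)
  rw [if_neg (by omega : ¬ i = 1), map_sub, sub_eq_zero] at h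
  have e : i - 1 - 1 = i - 2 := by omega
  simp only [xQ, ← map_pow, ← map_mul, e]
  exact h

lemma qq_add_self (x : Qring m) : x + x = 0 := by
  have hp : (1 + 1 : MvPolynomial (Fin m) (ZMod 2)) = 0 := by
    rw [← C_1, ← C_add]
    have : (1 + 1 : ZMod 2) = 0 := by decide
    rw [this, C_0]
  have h2 : (1 + 1 : Qring m) = 0 := by
    have : ((1 + 1 : Qring m)) = (Ideal.Quotient.mk (Qrel m)) (1 + 1) := by
      rw [map_add, map_one]
    rw [this, hp, map_zero]
  calc x + x = (1 + 1) * x := by ring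
    _ = 0 := by rw [h2, zero_mul]

lemma even_nsmul_zero {n : ℕ} (hn : Even n) (x : Qring m) : n • x = 0 := by
  obtain ⟨k, rfl⟩ := hn
  rw [add_nsmul]
  exact qq_add_self m _

lemma odd_nsmul_eq {n : ℕ} (hn : Odd n) (x : Qring m) : n • x = x := by
  obtain ⟨k, rfl⟩ := hn
  rw [add_nsmul, one_nsmul, even_nsmul_zero m ⟨k, (two_mul k)⟩ x, zero_add]

/-- interval monomial x_{r-L+1} ⋯ x_r ; equals 0 if L > r, 1 if L = 0. -/
def cI (r : ℕ) : ℕ → Qring m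
  | 0 => 1
  | (L+1) => if L < r then xQ m (r - L) * cI r L else 0

lemma cI_zero (r : ℕ) : cI m r 0 = 1 := rfl

lemma cI_succ (r L : ℕ) (h : L < r) : cI m r (L+1) = xQ m (r - L) * cI m r L := by
  rw [cI, if_pos h]

lemma cI_of_lt {r L : ℕ} (h : r < L) : cI m r L = 0 := by
  cases L with
  | zero => omega
  | succ L => rw [cI, if_neg (by omega)]


lemma cI_peel (r L : ℕ) (h : L + 1 ≤ r) :
    cI m r (L+1) = cI m (r-1) L * xQ m r := by
  induction L with
  | zero =>
    rw [cI_succ m r 0 (by omega), cI_zero, cI_zero, Nat.sub_zero, mul_one, one_mul]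
  | succ L ih =>
    rw [cI_succ m r (L+1) (by omega), ih (by omega),
        cI_succ m (r-1) L (by omega)]
    have e : r - (L+1) = r - 1 - L := by omega
    rw [e]; ring

lemma xQ_mul_cI (L : ℕ) : ∀ t r : ℕ, 1 ≤ t → t ≤ r → r ≤ m → r ≤ L + t →
    xQ m t * cI m r L = cI m r (L+1) := by
  induction L with
  | zero =>
    intro t r h1 h2 hm h
    have : t = r := by omega
    subst this
    rw [cI_zero, mul_one, cI_succ m t 0 (by omega), Nat.sub_zero, cI_zero, mul_one]
  | succ L ih =>
    intro t r h1 h2 hm h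
    by_cases hL : L + 1 ≤ r
    · rw [cI_succ m r L (by omega)]
      by_cases hdeep : r ≤ L + t
      · -- deep case
        have step : xQ m t * (xQ m (r - L) * cI m r L)
            = xQ m (r-L) * xQ m (r-L) * cI m r L := by
          rw [mul_left_comm, ih t r h1 h2 hm hdeep, cI_succ m r L (by omega)]
          ring
        rw [step]
        by_cases h2r : 2 ≤ r - L
        · rw [← pow_two, rel_succ m (r-L) h2r (by omega)]
          have e1 : r - L - 1 = r - (L+1) := by omega
          rw [mul_assoc, ← cI_succ m r L (by omega), e1,
              ← cI_succ m r (L+1) (by omega)]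
        · -- r - L = 1
          have e1 : r - L = 1 := by omega
          rw [e1, ← pow_two, rel_one, zero_mul, cI_of_lt m (by omega : r < L + 1 + 1)]
      · -- touching case : t = r - (L+1), r = L + 1 + t
        have ht : t = r - (L+1) := by omega
        have hr2 : L + 2 ≤ r := by omega
        rw [cI_succ m r (L+1) (by omega), ← ht, ← cI_succ m r L (by omega)]
    · -- r < L+1 : both sides are 0
      rw [cI_of_lt m (by omega : r < L + 1), mul_zero,
          cI_of_lt m (by omega : r < L + 2)]

lemma xQ_pow (t e : ℕ) (h1 : 1 ≤ t) (h2 : t ≤ m) : xQ m t ^ e = cI m t e := by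
  induction e with
  | zero => rw [pow_zero, cI_zero]
  | succ e ih =>
    rw [pow_succ, mul_comm, ih, xQ_mul_cI m e t t h1 le_rfl h2 (by omega)]

lemma cI_mul_cI (i : ℕ) : ∀ b Lam : ℕ, b ≤ m → m ≤ Lam + b →
    cI m b i * cI m m Lam = cI m m (Lam + i) := by
  induction i with
  | zero => intro b Lam _ _; rw [cI_zero, one_mul, Nat.add_zero]
  | succ i ih =>
    intro b Lam hb h
    by_cases hib : i + 1 ≤ b
    · rw [cI_peel m b i hib, mul_assoc,
          xQ_mul_cI m Lam b m (by omega) hb le_rfl (by omega),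
          ih (b-1) (Lam+1) (by omega) (by omega)]
      congr 1; omega
    · rw [cI_of_lt m (by omega : b < i + 1), zero_mul,
          cI_of_lt m (by omega : m < Lam + (i+1))]

/-- partial sum x_1 + ⋯ + x_b -/
def Sg (b : ℕ) : Qring m := ∑ i ∈ Finset.Icc 1 b, xQ m i

lemma Sg_zero : Sg m 0 = 0 := by
  rw [Sg]
  rw [show Finset.Icc 1 0 = ∅ from rfl, Finset.sum_empty]

lemma Sg_succ (b : ℕ) : Sg m (b+1) = Sg m b + xQ m (b+1) := by
  rw [Sg, Sg, Finset.sum_Icc_succ_top (by omega)]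


lemma multiset_prod_zero (n : ℕ) (hn : n ≤ m) :
    ∀ (k : ℕ) (s : Multiset ℕ), s.sum ≤ k → (∀ i ∈ s, 1 ≤ i ∧ i ≤ n) →
      n < Multiset.card s → (s.map (xQ m)).prod = 0 := by
  intro k
  induction k with
  | zero =>
    intro s hsum hmem hcard
    exfalso
    have hne : s ≠ 0 := by
      intro h0; rw [h0, Multiset.card_zero] at hcard; omega
    obtain ⟨a, ha⟩ := Multiset.exists_mem_of_ne_zero hne
    have h1 := (hmem a ha).1
    have : 1 ≤ s.sum := le_trans h1 (Multiset.le_sum_of_mem ha)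
    omega
  | succ k ih =>
    intro s hsum hmem hcard
    by_cases hd : s.Nodup
    · exfalso
      have hsub : s.toFinset ⊆ Finset.Icc 1 n := by
        intro a ha
        rw [Multiset.mem_toFinset] at ha
        exact Finset.mem_Icc.2 (hmem a ha)
      have := Finset.card_le_card hsub
      rw [Multiset.toFinset_card_of_nodup hd, Nat.card_Icc] at this
      omega
    · rw [Multiset.nodup_iff_count_le_one] at hd
      push_neg at hd
      obtain ⟨a, ha2⟩ := hd
      have hamem : a ∈ s := by
        rw [← Multiset.count_pos]; omega
      have hamem' : a ∈ s.erase a := by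
        rw [← Multiset.count_pos, Multiset.count_erase_self]; omega
      set t := (s.erase a).erase a with ht
      have hs : s = a ::ₘ a ::ₘ t := by
        rw [ht, Multiset.cons_erase hamem', Multiset.cons_erase hamem]
      have hab := hmem a hamem
      have htmem : ∀ i ∈ t, 1 ≤ i ∧ i ≤ n := by
        intro i hi
        exact hmem i (by rw [hs]; exact Multiset.mem_cons_of_mem (Multiset.mem_cons_of_mem hi))
      have hprod : (s.map (xQ m)).prod = xQ m a ^ 2 * (t.map (xQ m)).prod := by
        rw [hs, Multiset.map_cons, Multiset.map_cons, Multiset.prod_cons,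
          Multiset.prod_cons]
        ring
      by_cases ha1 : a = 1
      · rw [hprod, ha1, rel_one, zero_mul]
      · have ha2' : 2 ≤ a := by omega
        rw [hprod, rel_succ m a ha2' (le_trans hab.2 hn)]
        have : xQ m (a-1) * xQ m a * (t.map (xQ m)).prod
            = (((a-1) ::ₘ a ::ₘ t).map (xQ m)).prod := by
          rw [Multiset.map_cons, Multiset.map_cons, Multiset.prod_cons,
            Multiset.prod_cons]
          ring
        rw [this]
        apply ih
        · have h1 : s.sum = a + (a + t.sum) := by
            rw [hs]; simp [Multiset.sum_cons]
          have h2 : ((a-1) ::ₘ a ::ₘ t).sum = (a-1) + (a + t.sum) := by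
            simp [Multiset.sum_cons]
          omega
        · intro i hi
          rcases Multiset.mem_cons.1 hi with h | hi'
          · subst h; omega
          · rcases Multiset.mem_cons.1 hi' with h | hi''
            · subst h; exact hab
            · exact htmem i hi''
        · have : Multiset.card ((a-1) ::ₘ a ::ₘ t) = Multiset.card s := by
            rw [hs]; simp
          omega

lemma sig_pow_mul_prod_zero (n : ℕ) (hn : n ≤ m) :
    ∀ (e : ℕ) (s : Multiset ℕ), (∀ i ∈ s, 1 ≤ i ∧ i ≤ n) →
      n < e + Multiset.card s → Sg m n ^ e * (s.map (xQ m)).prod = 0 := by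
  intro e
  induction e with
  | zero =>
    intro s hmem hcard
    rw [pow_zero, one_mul]
    exact multiset_prod_zero m n hn s.sum s le_rfl hmem (by omega)
  | succ e ih =>
    intro s hmem hcard
    rw [pow_succ, mul_assoc]
    have h1 : Sg m n * (s.map (xQ m)).prod
        = ∑ t ∈ Finset.Icc 1 n, xQ m t * (s.map (xQ m)).prod := by
      rw [Sg, Finset.sum_mul]
    rw [h1, Finset.mul_sum]
    apply Finset.sum_eq_zero
    intro t htmem
    rw [Finset.mem_Icc] at htmem
    have h2 : Sg m n ^ e * (xQ m t * (s.map (xQ m)).prod)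
        = Sg m n ^ e * (((t ::ₘ s)).map (xQ m)).prod := by
      rw [Multiset.map_cons, Multiset.prod_cons]
    rw [h2]
    apply ih
    · intro i hi
      rcases Multiset.mem_cons.1 hi with h | hi'
      · subst h; exact htmem
      · exact hmem i hi'
    · rw [Multiset.card_cons]; omega

lemma sig_pow_zero (b e : ℕ) (hb : b ≤ m) (h : b < e) : Sg m b ^ e = 0 := by
  have h := sig_pow_mul_prod_zero m b hb e 0 (by intro i hi; simp at hi) (by simp; omega)
  simp only [Multiset.map_zero, Multiset.prod_zero, mul_one] at h
  exact h


/-- The key structural lemma: `σ_b^e ⬝ (x_{e+1} ⋯ x_m) = φ(b,e) ⬝ (x_1 ⋯ x_m)`. -/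
lemma phi_lemma (b : ℕ) : ∀ e : ℕ, b < m → e ≤ m →
    Sg m b ^ e * cI m m (m - e) =
      if (e = 0 ∨ (Odd b ∧ e = 1) ∨ (Even b ∧ Even e ∧ e ≤ b)) then cI m m m else 0 := by
  induction b with
  | zero =>
    intro e _ _
    rcases Nat.eq_zero_or_pos e with he | he
    · subst he
      rw [if_pos (Or.inl rfl), pow_zero, one_mul, Nat.sub_zero]
    · rw [Sg_zero, zero_pow (by omega), zero_mul, if_neg]
      rintro (h0 | ⟨⟨t, ht⟩, _⟩ | ⟨_, _, h3⟩)
      · omega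
      · omega
      · omega
  | succ b ih =>
    intro e hbm hem
    rcases Nat.eq_zero_or_pos e with he | he
    · subst he
      rw [if_pos (Or.inl rfl), pow_zero, one_mul, Nat.sub_zero]
    by_cases hbe : b + 1 < e
    · rw [sig_pow_zero m (b+1) e (by omega) hbe, zero_mul, if_neg]
      rintro (h0 | ⟨_, h2⟩ | ⟨_, _, h3⟩)
      · omega
      · omega
      · omega
    -- main case : 1 ≤ e ≤ b+1
    have heb : e ≤ b + 1 := by omega
    rw [Sg_succ, add_pow, Finset.sum_mul]
    have key : ∀ k ∈ Finset.range (e+1),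
        Sg m b ^ k * xQ m (b+1) ^ (e-k) * ((e.choose k : ℕ) : Qring m) * cI m m (m - e)
        = (if (k = 0 ∨ (Odd b ∧ k = 1) ∨ (Even b ∧ Even k ∧ k ≤ b)) then e.choose k else 0)
            • cI m m m := by
      intro k hk
      rw [Finset.mem_range] at hk
      have arrange : Sg m b ^ k * xQ m (b+1) ^ (e-k) * ((e.choose k : ℕ) : Qring m)
            * cI m m (m - e)
          = ((e.choose k : ℕ) : Qring m)
            * (Sg m b ^ k * (cI m (b+1) (e-k) * cI m m (m - e))) := by
        rw [xQ_pow m (b+1) (e-k) (by omega) (by omega)]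
        ring
      rw [arrange, cI_mul_cI m (e-k) (b+1) (m-e) (by omega) (by omega)]
      have hidx : m - e + (e - k) = m - k := by omega
      rw [hidx, ih k (by omega) (by omega)]
      by_cases hphi : (k = 0 ∨ (Odd b ∧ k = 1) ∨ (Even b ∧ Even k ∧ k ≤ b))
      · rw [if_pos hphi, if_pos hphi, nsmul_eq_mul]
      · rw [if_neg hphi, if_neg hphi, mul_zero, zero_smul]
    rw [Finset.sum_congr rfl key, ← Finset.sum_smul]
    by_cases hb : Even b
    · -- b even, b+1 odd
      have hob1 : Odd (b+1) := Even.add_one hb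
      have hpoint : ∀ k ∈ Finset.range (e+1),
          (if (k = 0 ∨ (Odd b ∧ k = 1) ∨ (Even b ∧ Even k ∧ k ≤ b)) then e.choose k else 0)
          = (if Even k then e.choose k else 0) := by
        intro k hk
        rw [Finset.mem_range] at hk
        by_cases hek : Even k
        · rw [if_pos hek, if_pos]
          rcases Nat.eq_zero_or_pos k with h0 | h0
          · exact Or.inl h0
          · refine Or.inr (Or.inr ⟨hb, hek, ?_⟩)
            by_contra hgt
            have hkb : k = b + 1 := by omega
            subst hkb
            exact (Nat.even_add_one.1 hek) hb
        · rw [if_neg hek, if_neg]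
          rintro (h0 | ⟨hodd, _⟩ | ⟨_, hek2, _⟩)
          · exact hek (h0 ▸ Even.zero)
          · exact (Nat.not_even_iff_odd.2 hodd) hb
          · exact hek hek2
      rw [Finset.sum_congr rfl hpoint, (choose_parity_sums e he).1]
      by_cases he1 : e = 1
      · subst he1
        rw [if_pos (Or.inr (Or.inl ⟨hob1, rfl⟩))]
        norm_num
      · have heven : Even (2^(e-1)) := by
          rw [Nat.even_pow]
          exact ⟨even_two, by omega⟩
        rw [even_nsmul_zero m heven, if_neg]
        rintro (h0 | ⟨_, h2⟩ | ⟨hb1, _, _⟩)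
        · omega
        · omega
        · exact (Nat.even_add_one.1 hb1) hb
    · -- b odd, b+1 even
      have hob : Odd b := Nat.not_even_iff_odd.1 hb
      have heb1 : Even (b+1) := Odd.add_one hob
      have hpoint : ∀ k ∈ Finset.range (e+1),
          (if (k = 0 ∨ (Odd b ∧ k = 1) ∨ (Even b ∧ Even k ∧ k ≤ b)) then e.choose k else 0)
          = (if k = 0 then 1 else 0) + (if k = 1 then e else 0) := by
        intro k _
        by_cases h0 : k = 0
        · subst h0
          rw [if_pos (Or.inl rfl), if_pos rfl, if_neg (by omega), Nat.choose_zero_right,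
            add_zero]
        · by_cases h1 : k = 1
          · subst h1
            rw [if_pos (Or.inr (Or.inl ⟨hob, rfl⟩)), if_neg (by omega), if_pos rfl,
              Nat.choose_one_right, zero_add]
          · rw [if_neg ?side, if_neg h0, if_neg h1, add_zero]
            case side =>
              rintro (hh0 | ⟨_, hh1⟩ | ⟨hb2, _, _⟩)
              · exact h0 hh0
              · exact h1 hh1
              · exact hb hb2
      rw [Finset.sum_congr rfl hpoint, Finset.sum_add_distrib,
          Finset.sum_ite_eq' (Finset.range (e+1)) 0 (fun _ => 1),
          Finset.sum_ite_eq' (Finset.range (e+1)) 1 (fun _ => e),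
          if_pos (Finset.mem_range.2 (by omega)), if_pos (Finset.mem_range.2 (by omega))]
      by_cases hee : Even e
      · have hodd : Odd (1 + e) := by
          rcases hee with ⟨t, rfl⟩
          exact ⟨t, by ring⟩
        rw [odd_nsmul_eq m hodd, if_pos (Or.inr (Or.inr ⟨heb1, hee, heb⟩))]
      · have heven : Even (1 + e) := by
          rcases Nat.not_even_iff_odd.1 hee with ⟨t, rfl⟩
          exact ⟨t+1, by ring⟩
        rw [even_nsmul_zero m heven, if_neg]
        rintro (h0 | ⟨hodd1, _⟩ | ⟨_, hee2, _⟩)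
        · omega
        · exact (Nat.not_even_iff_odd.2 hodd1) heb1
        · exact hee hee2

end Aux

/-- Theorem 2.5: for `m = 2^p - 1` with `p > 1`, `(x_1 + ⋯ + x_m)^m = 0` in `Q_m`. -/
theorem statement0 (p : ℕ) (hp : 1 < p) (m : ℕ) [NeZero m] (hm : m = 2 ^ p - 1) :
    (∑ i ∈ Finset.Icc 1 m, xQ m i) ^ m = 0 := by
  have hm1 : 1 ≤ m := Nat.pos_of_ne_zero (NeZero.ne m)
  have h4 : 4 ≤ 2^p := by
    calc (4:ℕ) = 2^2 := rfl
      _ ≤ 2^p := Nat.pow_le_pow_right (by omega) hp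
  have h2p : m + 1 = 2^p := by omega
  have hm3 : 3 ≤ m := by omega
  have hmodd : ¬ Even m := by
    have hev : Even (m+1) := by
      rw [h2p, Nat.even_pow]
      exact ⟨even_two, by omega⟩
    exact Nat.even_add_one.1 hev
  have hm1even : Even (m - 1) := by
    have h := Nat.even_add_one (n := m - 1)
    rw [show m - 1 + 1 = m from by omega] at h
    by_contra hc
    exact hmodd (h.2 hc)
  have hsum : (∑ i ∈ Finset.Icc 1 m, xQ m i) = Sg m m := rfl
  rw [hsum]
  have hsg : Sg m m = Sg m (m-1) + xQ m m := by
    have h := Sg_succ m (m-1)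
    rw [show m - 1 + 1 = m from by omega] at h
    exact h
  rw [hsg, add_pow]
  have key : ∀ k ∈ Finset.range (m+1),
      Sg m (m-1) ^ k * xQ m m ^ (m-k) * ((m.choose k : ℕ) : Qring m)
      = (if Even k then m.choose k else 0) • cI m m m := by
    intro k hk
    rw [Finset.mem_range] at hk
    rw [xQ_pow m m (m-k) hm1 le_rfl]
    have harr : Sg m (m-1) ^ k * cI m m (m-k) * ((m.choose k : ℕ) : Qring m)
        = ((m.choose k : ℕ) : Qring m) * (Sg m (m-1) ^ k * cI m m (m-k)) := by ring
    rw [harr, phi_lemma m (m-1) k (by omega) (by omega)]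
    by_cases hek : Even k
    · rw [if_pos ?pos, if_pos hek, nsmul_eq_mul]
      case pos =>
        rcases Nat.eq_zero_or_pos k with h0 | h0
        · exact Or.inl h0
        · refine Or.inr (Or.inr ⟨hm1even, hek, ?_⟩)
          by_contra hgt
          have hkm : k = m := by omega
          subst hkm
          exact hmodd hek
    · rw [if_neg ?neg, if_neg hek, mul_zero, zero_smul]
      case neg =>
        rintro (h0 | ⟨hodd, _⟩ | ⟨_, hek2, _⟩)
        · exact hek (h0 ▸ Even.zero)
        · exact (Nat.not_even_iff_odd.2 hodd) hm1even
        · exact hek hek2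
  rw [Finset.sum_congr rfl key, ← Finset.sum_smul, (choose_parity_sums m hm1).1]
  exact even_nsmul_zero m (by rw [Nat.even_pow]; exact ⟨even_two, by omega⟩) _
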